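/- Let ω = (ω₀, …, ω_{n+1}) be a key sequence and fix i with 1 ≤ i ≤ n. Let (β_{i,0}, …, β_{i,i−1}) be the unique representation tuple of α_i·ω_i, and define μ_i := ∏_{s=1}^{i} α_s − Σ_{j=1}^{i−1} ( ∏_{s=1}^{j−1} α_s )·β_{i,j}. Then μ_i ≥ 1. -/

import Mathlib

/-- `dks ω k` is `gcd(|ω₀|, …, |ω_k|)`. -/
def dks (ω : ℕ → ℤ) (k : ℕ) : ℕ :=
  (Finset.range (k + 1)).gcd fun j => (ω j).natAbs

/-- `alphaK ω k` is `α_k = d_{k−1}/d_k`. -/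
def alphaK (ω : ℕ → ℤ) (k : ℕ) : ℕ := dks ω (k - 1) / dks ω k

/-- A key sequence `(ω₀, …, ω_{n+1})`. -/
def IsKeySequence (n : ℕ) (ω : ℕ → ℤ) : Prop :=
  1 ≤ ω 0 ∧ dks ω (n + 1) = 1 ∧
    ∀ k, 1 ≤ k → k ≤ n → ω (k + 1) < (alphaK ω k : ℤ) * ω k

/-- A key sequence is primitive iff `ω_{n+1} > 0`. -/
def IsPrimitive (n : ℕ) (ω : ℕ → ℤ) : Prop := 0 < ω (n + 1)

/-- For a key sequence `ω` and `1 ≤ i ≤ n`, if `(β_{i,0}, …, β_{i,i−1})` is the unique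
representation tuple of `α_i·ω_i`, then
`μ_i := ∏_{s=1}^{i} α_s − Σ_{j=1}^{i−1} (∏_{s=1}^{j−1} α_s)·β_{i,j} ≥ 1`. -/
theorem stmt11 (n : ℕ) (ω : ℕ → ℤ) (hω : IsKeySequence n ω)
    (i : ℕ) (hi1 : 1 ≤ i) (hin : i ≤ n) (β : ℕ → ℤ)
    (hβ : ∀ j, 1 ≤ j → j < i → 0 ≤ β j ∧ β j < (alphaK ω j : ℤ))
    (hrep : (alphaK ω i : ℤ) * ω i = ∑ j ∈ Finset.range i, β j * ω j) :
    1 ≤ (∏ s ∈ Finset.Icc 1 i, (alphaK ω s : ℤ)) -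
        ∑ j ∈ Finset.Icc 1 (i - 1),
          (∏ s ∈ Finset.Icc 1 (j - 1), (alphaK ω s : ℤ)) * β j := by
  obtain ⟨hω0, -, -⟩ := hω
  have hdpos : ∀ k, 0 < dks ω k := by
    intro k
    rw [Nat.pos_iff_ne_zero, Ne, dks, Finset.gcd_eq_zero_iff]
    intro h
    have h0 := h 0 (Finset.mem_range.mpr (Nat.succ_pos k))
    have : ω 0 = 0 := Int.natAbs_eq_zero.mp h0
    omega
  have hdvd : ∀ k, dks ω (k + 1) ∣ dks ω k := by
    intro k
    apply Finset.dvd_gcd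
    intro j hj
    exact Finset.gcd_dvd (Finset.mem_range.mpr (by
      have := Finset.mem_range.mp hj; omega))
  have halpha : ∀ s, 1 ≤ s → 1 ≤ alphaK ω s := by
    intro s hs
    unfold alphaK
    obtain ⟨t, rfl⟩ : ∃ t, s = t + 1 := ⟨s - 1, by omega⟩
    have h1 := hdpos t
    have h2 := hdpos (t + 1)
    have h3 : dks ω (t + 1) ≤ dks ω t := Nat.le_of_dvd h1 (hdvd t)
    simpa [Nat.one_le_div_iff h2] using h3
  have hαZ : ∀ s, 1 ≤ s → 1 ≤ (alphaK ω s : ℤ) := fun s hs => by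
    exact_mod_cast halpha s hs
  have hfpos : ∀ m, 1 ≤ ∏ s ∈ Finset.Icc 1 m, (alphaK ω s : ℤ) := by
    intro m
    have h : (1 : ℕ) ≤ ∏ s ∈ Finset.Icc 1 m, alphaK ω s :=
      Finset.one_le_prod' fun s hs => halpha s (Finset.mem_Icc.mp hs).1
    exact_mod_cast h
  have key : ∀ m, m < i →
      ∑ j ∈ Finset.Icc 1 m, (∏ s ∈ Finset.Icc 1 (j - 1), (alphaK ω s : ℤ)) * β j ≤
        (∏ s ∈ Finset.Icc 1 m, (alphaK ω s : ℤ)) - 1 := by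
    intro m
    induction m with
    | zero => intro _; simp
    | succ m ih =>
      intro hm
      rw [Finset.sum_Icc_succ_top (by omega : 1 ≤ m + 1),
        Finset.prod_Icc_succ_top (by omega : 1 ≤ m + 1)]
      have h1 := ih (by omega)
      have hb := hβ (m + 1) (by omega) hm
      have hα := hαZ (m + 1) (by omega)
      have hfm := hfpos m
      have hstep : (∏ s ∈ Finset.Icc 1 ((m + 1) - 1), (alphaK ω s : ℤ)) * β (m + 1) ≤
          (∏ s ∈ Finset.Icc 1 m, (alphaK ω s : ℤ)) * ((alphaK ω (m + 1) : ℤ) - 1) := by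
        simp only [Nat.add_sub_cancel]
        exact mul_le_mul_of_nonneg_left (by linarith [hb.2]) (by linarith)
      nlinarith [hstep, h1, hfm, hα]
  have hkey := key (i - 1) (by omega)
  have hfi : (∏ s ∈ Finset.Icc 1 i, (alphaK ω s : ℤ)) =
      (∏ s ∈ Finset.Icc 1 (i - 1), (alphaK ω s : ℤ)) * (alphaK ω i : ℤ) := by
    obtain ⟨t, rfl⟩ : ∃ t, i = t + 1 := ⟨i - 1, by omega⟩
    simpa using Finset.prod_Icc_succ_top (by omega : 1 ≤ t + 1) (fun s => (alphaK ω s : ℤ))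
  have hαi := hαZ i hi1
  have hfpi := hfpos (i - 1)
  nlinarith [hkey, hfi, hαi, hfpi]
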